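/- (Example B) Let 0 < r_1 < r_2 < r_3 < r_4. At the parade with angles (α_1, α_2, α_3, α_4) = (π, 0, π, 0) (signed coordinates x = (−r_1, r_2, −r_3, r_4)), the Hessian matrix of L with respect to (α_1, α_2, α_3) is negative definite; hence this parade is a nondegenerate local maximum of L (Morse index 3). -/

import Mathlib

open Real

/-- Length of the chordal segment between points at radii `r`, `r'` whose polar angles
differ by `θ`. -/
noncomputable def ell (r r' θ : ℝ) : ℝ :=
  Real.sqrt (r ^ 2 + r' ^ 2 - 2 * r * r' * Real.cos θ)

/-- The perimeter of the connecting cycle for four concentric circles of radii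
`r1, r2, r3, r4`, as a function of the polar angles `a1, a2, a3` of the first three
vertices, the fourth angle being fixed to `0`. -/
noncomputable def L4 (r1 r2 r3 r4 : ℝ) (a1 a2 a3 : ℝ) : ℝ :=
  ell r1 r2 (a2 - a1) + ell r2 r3 (a3 - a2) + ell r3 r4 (0 - a3) + ell r4 r1 (a1 - 0)

/-- Partial derivative in the first of three variables. -/
noncomputable def pd1 (f : ℝ → ℝ → ℝ → ℝ) (a b c : ℝ) : ℝ := deriv (fun x => f x b c) a

/-- Partial derivative in the second of three variables. -/
noncomputable def pd2 (f : ℝ → ℝ → ℝ → ℝ) (a b c : ℝ) : ℝ := deriv (fun y => f a y c) b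

/-- Partial derivative in the third of three variables. -/
noncomputable def pd3 (f : ℝ → ℝ → ℝ → ℝ) (a b c : ℝ) : ℝ := deriv (fun z => f a b z) c

/-- The Hessian matrix of `L4 r1 r2 r3 r4` at `(a, b, c)` in the reduced coordinates
`(α₁, α₂, α₃)`. -/
noncomputable def hess4 (r1 r2 r3 r4 a b c : ℝ) : Matrix (Fin 3) (Fin 3) ℝ :=
  !![pd1 (pd1 (L4 r1 r2 r3 r4)) a b c, pd1 (pd2 (L4 r1 r2 r3 r4)) a b c,
       pd1 (pd3 (L4 r1 r2 r3 r4)) a b c;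
     pd2 (pd1 (L4 r1 r2 r3 r4)) a b c, pd2 (pd2 (L4 r1 r2 r3 r4)) a b c,
       pd2 (pd3 (L4 r1 r2 r3 r4)) a b c;
     pd3 (pd1 (L4 r1 r2 r3 r4)) a b c, pd3 (pd2 (L4 r1 r2 r3 r4)) a b c,
       pd3 (pd3 (L4 r1 r2 r3 r4)) a b c]

set_option linter.unusedSectionVars false

lemma radicand_pos {r r' : ℝ} (hr : 0 < r) (hr' : 0 < r') (hne : r ≠ r') (θ : ℝ) :
    0 < r ^ 2 + r' ^ 2 - 2 * r * r' * Real.cos θ := by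
  have h1 : Real.cos θ ≤ 1 := Real.cos_le_one θ
  have hd : r - r' ≠ 0 := sub_ne_zero.mpr hne
  have h2 : 0 < (r - r') ^ 2 := pow_two_pos_of_ne_zero hd
  nlinarith [mul_pos hr hr']

lemma ell_pos {r r' : ℝ} (hr : 0 < r) (hr' : 0 < r') (hne : r ≠ r') (θ : ℝ) :
    0 < ell r r' θ := Real.sqrt_pos.mpr (radicand_pos hr hr' hne θ)

lemma ell_eq_of_cos {r r' θ : ℝ} (hr : 0 ≤ r) (hr' : 0 ≤ r') (hc : Real.cos θ = -1) :
    ell r r' θ = r + r' := by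
  have : r ^ 2 + r' ^ 2 - 2 * r * r' * Real.cos θ = (r + r') ^ 2 := by
    rw [hc]; ring
  rw [ell, this, Real.sqrt_sq (by linarith)]

lemma ell_le {r r' : ℝ} (hr : 0 ≤ r) (hr' : 0 ≤ r') (θ : ℝ) : ell r r' θ ≤ r + r' := by
  have h : r ^ 2 + r' ^ 2 - 2 * r * r' * Real.cos θ ≤ (r + r') ^ 2 := by
    nlinarith [Real.neg_one_le_cos θ, mul_nonneg hr hr']
  calc ell r r' θ ≤ Real.sqrt ((r + r') ^ 2) := Real.sqrt_le_sqrt h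
    _ = r + r' := Real.sqrt_sq (by linarith)

noncomputable def Dd (r r' θ : ℝ) : ℝ := r * r' * Real.sin θ / ell r r' θ

lemma hasDerivAt_ell {r r' : ℝ} (hr : 0 < r) (hr' : 0 < r') (hne : r ≠ r') (θ : ℝ) :
    HasDerivAt (fun t => ell r r' t) (Dd r r' θ) θ := by
  have hf : HasDerivAt (fun t => r ^ 2 + r' ^ 2 - 2 * r * r' * Real.cos t)
      (2 * r * r' * Real.sin θ) θ := by
    simpa [sub_eq_add_neg, mul_comm, mul_assoc, mul_neg] using
      (((Real.hasDerivAt_cos θ).const_mul (2 * r * r')).neg.const_add (r ^ 2 + r' ^ 2))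
  have h := hf.sqrt (ne_of_gt (radicand_pos hr hr' hne θ))
  convert h using 1
  · rfl
  have hpos := ell_pos hr hr' hne θ
  rw [Dd]
  rw [show Real.sqrt (r ^ 2 + r' ^ 2 - 2 * r * r' * Real.cos θ) = ell r r' θ from rfl]
  field_simp

lemma hasDerivAt_Dd {r r' : ℝ} (hr : 0 < r) (hr' : 0 < r') (hne : r ≠ r') {θ0 : ℝ}
    (hc : Real.cos θ0 = -1) :
    HasDerivAt (fun t => Dd r r' t) (-(r * r' / (r + r'))) θ0 := by
  have hsin : Real.sin θ0 = 0 := by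
    have := Real.sin_sq_add_cos_sq θ0
    nlinarith [this]
  have hell : ell r r' θ0 = r + r' := ell_eq_of_cos hr.le hr'.le hc
  have hne0 : ell r r' θ0 ≠ 0 := ne_of_gt (ell_pos hr hr' hne θ0)
  have hnum : HasDerivAt (fun t => r * r' * Real.sin t) (r * r' * Real.cos θ0) θ0 :=
    (Real.hasDerivAt_sin θ0).const_mul (r * r')
  have h := hnum.div (hasDerivAt_ell hr hr' hne θ0) hne0
  convert h using 1
  · rfl
  · rfl
  · rfl
  rw [Dd, hsin, hell, hc]
  have : r + r' ≠ 0 := by positivity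
  field_simp
  ring

section
variable {r1 r2 r3 r4 : ℝ} (h1 : 0 < r1) (h12 : r1 < r2) (h23 : r2 < r3) (h34 : r3 < r4)

include h1 h12 h23 h34

lemma pd1_L4 (a b c : ℝ) :
    pd1 (L4 r1 r2 r3 r4) a b c = -(Dd r1 r2 (b - a)) + Dd r4 r1 (a - 0) := by
  have h2 : 0 < r2 := h1.trans h12
  have h3 : 0 < r3 := h2.trans h23
  have h4 : 0 < r4 := h3.trans h34
  have hA : HasDerivAt (fun x => ell r1 r2 (b - x)) (Dd r1 r2 (b - a) * (-1)) a := by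
    have hin : HasDerivAt (fun x : ℝ => b - x) (-1) a := by
      simpa using (hasDerivAt_id a).const_sub b
    exact (hasDerivAt_ell h1 h2 (ne_of_lt h12) (b - a)).comp a hin
  have hD : HasDerivAt (fun x => ell r4 r1 (x - 0)) (Dd r4 r1 (a - 0) * 1) a := by
    have hin : HasDerivAt (fun x : ℝ => x - 0) (1 : ℝ) a := by
      simpa using (hasDerivAt_id a).sub_const 0
    have := (hasDerivAt_ell h4 h1 (ne_of_gt (h12.trans (h23.trans h34))) (a - 0)).comp a hin; exact this
  have hL : HasDerivAt (fun x => L4 r1 r2 r3 r4 x b c)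
      (Dd r1 r2 (b - a) * (-1) + 0 + 0 + Dd r4 r1 (a - 0) * 1) a := by
    exact ((hA.add (hasDerivAt_const a (ell r2 r3 (c - b)))).add
      (hasDerivAt_const a (ell r3 r4 (0 - c)))).add hD
  rw [pd1, hL.deriv]; ring

lemma pd2_L4 (a b c : ℝ) :
    pd2 (L4 r1 r2 r3 r4) a b c = Dd r1 r2 (b - a) - Dd r2 r3 (c - b) := by
  have h2 : 0 < r2 := h1.trans h12
  have h3 : 0 < r3 := h2.trans h23
  have hA : HasDerivAt (fun y => ell r1 r2 (y - a)) (Dd r1 r2 (b - a) * 1) b := by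
    have hin : HasDerivAt (fun y : ℝ => y - a) (1 : ℝ) b := (hasDerivAt_id b).sub_const a
    have := (hasDerivAt_ell h1 h2 (ne_of_lt h12) (b - a)).comp b hin; exact this
  have hB : HasDerivAt (fun y => ell r2 r3 (c - y)) (Dd r2 r3 (c - b) * (-1)) b := by
    have hin : HasDerivAt (fun y : ℝ => c - y) (-1) b := by
      simpa using (hasDerivAt_id b).const_sub c
    exact (hasDerivAt_ell h2 h3 (ne_of_lt h23) (c - b)).comp b hin
  have hL : HasDerivAt (fun y => L4 r1 r2 r3 r4 a y c)
      (Dd r1 r2 (b - a) * 1 + Dd r2 r3 (c - b) * (-1) + 0 + 0) b := by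
    exact ((hA.add hB).add (hasDerivAt_const b (ell r3 r4 (0 - c)))).add
      (hasDerivAt_const b (ell r4 r1 (a - 0)))
  rw [pd2, hL.deriv]; ring

lemma pd3_L4 (a b c : ℝ) :
    pd3 (L4 r1 r2 r3 r4) a b c = Dd r2 r3 (c - b) - Dd r3 r4 (0 - c) := by
  have h2 : 0 < r2 := h1.trans h12
  have h3 : 0 < r3 := h2.trans h23
  have h4 : 0 < r4 := h3.trans h34
  have hB : HasDerivAt (fun z => ell r2 r3 (z - b)) (Dd r2 r3 (c - b) * 1) c := by
    have hin : HasDerivAt (fun z : ℝ => z - b) (1 : ℝ) c := (hasDerivAt_id c).sub_const b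
    have := (hasDerivAt_ell h2 h3 (ne_of_lt h23) (c - b)).comp c hin; exact this
  have hC : HasDerivAt (fun z => ell r3 r4 (0 - z)) (Dd r3 r4 (0 - c) * (-1)) c := by
    have hin : HasDerivAt (fun z : ℝ => (0:ℝ) - z) (-1) c := by
      simpa using (hasDerivAt_id c).const_sub 0
    exact (hasDerivAt_ell h3 h4 (ne_of_lt h34) (0 - c)).comp c hin
  have hL : HasDerivAt (fun z => L4 r1 r2 r3 r4 a b z)
      (0 + Dd r2 r3 (c - b) * 1 + Dd r3 r4 (0 - c) * (-1) + 0) c := by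
    exact (((hasDerivAt_const c (ell r1 r2 (b - a))).add hB).add hC).add
      (hasDerivAt_const c (ell r4 r1 (a - 0)))
  rw [pd3, hL.deriv]; ring

end

set_option linter.unusedSectionVars false

noncomputable def Kk (r r' : ℝ) : ℝ := r * r' / (r + r')

section
variable {r1 r2 r3 r4 : ℝ} (h1 : 0 < r1) (h12 : r1 < r2) (h23 : r2 < r3) (h34 : r3 < r4)

include h1 h12 h23 h34

lemma hess_entries :
    pd1 (pd1 (L4 r1 r2 r3 r4)) π 0 π = -(Kk r1 r2) - Kk r4 r1 ∧
    pd1 (pd2 (L4 r1 r2 r3 r4)) π 0 π = Kk r1 r2 ∧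
    pd1 (pd3 (L4 r1 r2 r3 r4)) π 0 π = 0 ∧
    pd2 (pd1 (L4 r1 r2 r3 r4)) π 0 π = Kk r1 r2 ∧
    pd2 (pd2 (L4 r1 r2 r3 r4)) π 0 π = -(Kk r1 r2) - Kk r2 r3 ∧
    pd2 (pd3 (L4 r1 r2 r3 r4)) π 0 π = Kk r2 r3 ∧
    pd3 (pd1 (L4 r1 r2 r3 r4)) π 0 π = 0 ∧
    pd3 (pd2 (L4 r1 r2 r3 r4)) π 0 π = Kk r2 r3 ∧
    pd3 (pd3 (L4 r1 r2 r3 r4)) π 0 π = -(Kk r2 r3) - Kk r3 r4 := by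
  have h2 : 0 < r2 := h1.trans h12
  have h3 : 0 < r3 := h2.trans h23
  have h4 : 0 < r4 := h3.trans h34
  have hne12 : r1 ≠ r2 := ne_of_lt h12
  have hne23 : r2 ≠ r3 := ne_of_lt h23
  have hne34 : r3 ≠ r4 := ne_of_lt h34
  have hne41 : r4 ≠ r1 := ne_of_gt (h12.trans (h23.trans h34))
  have hcnegpi : Real.cos (-π) = -1 := by simp
  have hcpi : Real.cos π = -1 := Real.cos_pi
  -- derivative helpers
  have hid : ∀ t : ℝ, HasDerivAt (fun x : ℝ => x) (1:ℝ) t := fun t => hasDerivAt_id t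
  refine ⟨?_, ?_, ?_, ?_, ?_, ?_, ?_, ?_, ?_⟩
  · -- H11
    have hfun : (fun x => pd1 (L4 r1 r2 r3 r4) x 0 π)
        = fun x => -(Dd r1 r2 (0 - x)) + Dd r4 r1 (x - 0) :=
      funext fun x => pd1_L4 h1 h12 h23 h34 x 0 π
    have hA : HasDerivAt (fun x => Dd r1 r2 (0 - x)) (-(Kk r1 r2) * (-1)) π := by
      have hin : HasDerivAt (fun x : ℝ => (0:ℝ) - x) (-1) π := by
        simpa using (hasDerivAt_id π).const_sub 0
      have := (hasDerivAt_Dd h1 h2 hne12 (θ0 := (0:ℝ) - π) (by simpa using hcnegpi)).comp π hin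
      simpa [Kk, Function.comp_def] using this
    have hB : HasDerivAt (fun x => Dd r4 r1 (x - 0)) (-(Kk r4 r1) * 1) π := by
      have hin : HasDerivAt (fun x : ℝ => x - 0) (1:ℝ) π := (hasDerivAt_id π).sub_const 0
      have := (hasDerivAt_Dd h4 h1 hne41 (θ0 := π - 0) (by simpa using hcpi)).comp π hin
      simpa [Kk, Function.comp_def] using this
    rw [pd1, hfun]; exact (hA.neg.add hB).deriv.trans (by ring)
  · -- H12
    have hfun : (fun x => pd2 (L4 r1 r2 r3 r4) x 0 π)
        = fun x => Dd r1 r2 (0 - x) - Dd r2 r3 (π - 0) :=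
      funext fun x => pd2_L4 h1 h12 h23 h34 x 0 π
    have hA : HasDerivAt (fun x => Dd r1 r2 (0 - x)) (-(Kk r1 r2) * (-1)) π := by
      have hin : HasDerivAt (fun x : ℝ => (0:ℝ) - x) (-1) π := by
        simpa using (hasDerivAt_id π).const_sub 0
      have := (hasDerivAt_Dd h1 h2 hne12 (θ0 := (0:ℝ) - π) (by simpa using hcnegpi)).comp π hin
      simpa [Kk, Function.comp_def] using this
    rw [pd1, hfun, (hA.sub_const _).deriv]; ring
  · -- H13
    have hfun : (fun x => pd3 (L4 r1 r2 r3 r4) x 0 π)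
        = fun _ => Dd r2 r3 (π - 0) - Dd r3 r4 (0 - π) :=
      funext fun x => pd3_L4 h1 h12 h23 h34 x 0 π
    rw [pd1, hfun, deriv_const]
  · -- H21
    have hfun : (fun y => pd1 (L4 r1 r2 r3 r4) π y π)
        = fun y => -(Dd r1 r2 (y - π)) + Dd r4 r1 (π - 0) :=
      funext fun y => pd1_L4 h1 h12 h23 h34 π y π
    have hA : HasDerivAt (fun y => Dd r1 r2 (y - π)) (-(Kk r1 r2) * 1) 0 := by
      have hin : HasDerivAt (fun y : ℝ => y - π) (1:ℝ) 0 := (hasDerivAt_id 0).sub_const π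
      have := (hasDerivAt_Dd h1 h2 hne12 (θ0 := (0:ℝ) - π) (by simpa using hcnegpi)).comp 0 hin
      simpa [Kk, Function.comp_def] using this
    rw [pd2, hfun]; exact (hA.neg.add_const _).deriv.trans (by ring)
  · -- H22
    have hfun : (fun y => pd2 (L4 r1 r2 r3 r4) π y π)
        = fun y => Dd r1 r2 (y - π) - Dd r2 r3 (π - y) :=
      funext fun y => pd2_L4 h1 h12 h23 h34 π y π
    have hA : HasDerivAt (fun y => Dd r1 r2 (y - π)) (-(Kk r1 r2) * 1) 0 := by
      have hin : HasDerivAt (fun y : ℝ => y - π) (1:ℝ) 0 := (hasDerivAt_id 0).sub_const π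
      have := (hasDerivAt_Dd h1 h2 hne12 (θ0 := (0:ℝ) - π) (by simpa using hcnegpi)).comp 0 hin
      simpa [Kk, Function.comp_def] using this
    have hB : HasDerivAt (fun y => Dd r2 r3 (π - y)) (-(Kk r2 r3) * (-1)) 0 := by
      have hin : HasDerivAt (fun y : ℝ => π - y) (-1) 0 := by
        simpa using (hasDerivAt_id 0).const_sub π
      have := (hasDerivAt_Dd h2 h3 hne23 (θ0 := π - 0) (by simpa using hcpi)).comp 0 hin
      simpa [Kk, Function.comp_def] using this
    rw [pd2, hfun]; exact (hA.sub hB).deriv.trans (by ring)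
  · -- H23
    have hfun : (fun y => pd3 (L4 r1 r2 r3 r4) π y π)
        = fun y => Dd r2 r3 (π - y) - Dd r3 r4 (0 - π) :=
      funext fun y => pd3_L4 h1 h12 h23 h34 π y π
    have hB : HasDerivAt (fun y => Dd r2 r3 (π - y)) (-(Kk r2 r3) * (-1)) 0 := by
      have hin : HasDerivAt (fun y : ℝ => π - y) (-1) 0 := by
        simpa using (hasDerivAt_id 0).const_sub π
      have := (hasDerivAt_Dd h2 h3 hne23 (θ0 := π - 0) (by simpa using hcpi)).comp 0 hin
      simpa [Kk, Function.comp_def] using this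
    rw [pd2, hfun, (hB.sub_const _).deriv]; ring
  · -- H31
    have hfun : (fun z => pd1 (L4 r1 r2 r3 r4) π 0 z)
        = fun _ => -(Dd r1 r2 (0 - π)) + Dd r4 r1 (π - 0) :=
      funext fun z => pd1_L4 h1 h12 h23 h34 π 0 z
    rw [pd3, hfun, deriv_const]
  · -- H32
    have hfun : (fun z => pd2 (L4 r1 r2 r3 r4) π 0 z)
        = fun z => Dd r1 r2 (0 - π) - Dd r2 r3 (z - 0) :=
      funext fun z => pd2_L4 h1 h12 h23 h34 π 0 z
    have hB : HasDerivAt (fun z => Dd r2 r3 (z - 0)) (-(Kk r2 r3) * 1) π := by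
      have hin : HasDerivAt (fun z : ℝ => z - 0) (1:ℝ) π := (hasDerivAt_id π).sub_const 0
      have := (hasDerivAt_Dd h2 h3 hne23 (θ0 := π - 0) (by simpa using hcpi)).comp π hin
      simpa [Kk, Function.comp_def] using this
    rw [pd3, hfun, (hB.const_sub _).deriv]
    · ring
  · -- H33
    have hfun : (fun z => pd3 (L4 r1 r2 r3 r4) π 0 z)
        = fun z => Dd r2 r3 (z - 0) - Dd r3 r4 (0 - z) :=
      funext fun z => pd3_L4 h1 h12 h23 h34 π 0 z
    have hB : HasDerivAt (fun z => Dd r2 r3 (z - 0)) (-(Kk r2 r3) * 1) π := by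
      have hin : HasDerivAt (fun z : ℝ => z - 0) (1:ℝ) π := (hasDerivAt_id π).sub_const 0
      have := (hasDerivAt_Dd h2 h3 hne23 (θ0 := π - 0) (by simpa using hcpi)).comp π hin
      simpa [Kk, Function.comp_def] using this
    have hC : HasDerivAt (fun z => Dd r3 r4 (0 - z)) (-(Kk r3 r4) * (-1)) π := by
      have hin : HasDerivAt (fun z : ℝ => (0:ℝ) - z) (-1) π := by
        simpa using (hasDerivAt_id π).const_sub 0
      have := (hasDerivAt_Dd h3 h4 hne34 (θ0 := (0:ℝ) - π) (by simpa using hcnegpi)).comp π hin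
      simpa [Kk, Function.comp_def] using this
    rw [pd3, hfun]; exact (hB.sub hC).deriv.trans (by ring)

end

/-- Example B: for `0 < r1 < r2 < r3 < r4` the Hessian of the perimeter at
the parade `(α₁, α₂, α₃, α₄) = (π, 0, π, 0)` (signed coordinates `(−r1, r2, −r3, r4)`) is
negative definite; hence this parade is a nondegenerate local maximum of the perimeter
(Morse index 3). -/
theorem stmt_19 (r1 r2 r3 r4 : ℝ) (h1 : 0 < r1) (h12 : r1 < r2) (h23 : r2 < r3)
    (h34 : r3 < r4) :
    (-(hess4 r1 r2 r3 r4 π 0 π)).PosDef ∧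
    IsLocalMax (fun q : ℝ × ℝ × ℝ => L4 r1 r2 r3 r4 q.1 q.2.1 q.2.2) (π, 0, π) := by
  have h2 : 0 < r2 := h1.trans h12
  have h3 : 0 < r3 := h2.trans h23
  have h4 : 0 < r4 := h3.trans h34
  obtain ⟨e11, e12, e13, e21, e22, e23, e31, e32, e33⟩ := hess_entries h1 h12 h23 h34
  have hk12 : 0 < Kk r1 r2 := by rw [Kk]; positivity
  have hk23 : 0 < Kk r2 r3 := by rw [Kk]; positivity
  have hk34 : 0 < Kk r3 r4 := by rw [Kk]; positivity
  have hk41 : 0 < Kk r4 r1 := by rw [Kk]; positivity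
  constructor
  · refine Matrix.PosDef.of_dotProduct_mulVec_pos ?_ ?_
    · rw [Matrix.IsHermitian]
      ext i j
      fin_cases i <;> fin_cases j <;>
        simp [hess4, Matrix.conjTranspose_apply, Matrix.neg_apply,
          e12, e13, e21, e23, e31, e32]
    · intro x hx
      have hq : dotProduct (star x) (Matrix.mulVec (-(hess4 r1 r2 r3 r4 π 0 π)) x)
          = Kk r4 r1 * (x 0) ^ 2 + Kk r1 r2 * (x 0 - x 1) ^ 2
            + Kk r2 r3 * (x 1 - x 2) ^ 2 + Kk r3 r4 * (x 2) ^ 2 := by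
        simp [dotProduct, Matrix.mulVec, Fin.sum_univ_three, hess4, Matrix.neg_apply,
          e11, e12, e13, e21, e22, e23, e31, e32, e33]
        ring
      rw [hq]
      have hnn1 : 0 ≤ Kk r4 r1 * (x 0) ^ 2 := mul_nonneg hk41.le (sq_nonneg _)
      have hnn2 : 0 ≤ Kk r1 r2 * (x 0 - x 1) ^ 2 := mul_nonneg hk12.le (sq_nonneg _)
      have hnn3 : 0 ≤ Kk r2 r3 * (x 1 - x 2) ^ 2 := mul_nonneg hk23.le (sq_nonneg _)
      have hnn4 : 0 ≤ Kk r3 r4 * (x 2) ^ 2 := mul_nonneg hk34.le (sq_nonneg _)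
      by_cases hx0 : x 0 = 0
      · by_cases hx2 : x 2 = 0
        · have hx1 : x 1 ≠ 0 := by
            intro hx1
            apply hx
            ext i
            fin_cases i <;> assumption
          have : 0 < Kk r1 r2 * (x 0 - x 1) ^ 2 := by
            rw [hx0]
            have : (0 : ℝ) - x 1 ≠ 0 := by simpa using hx1
            exact mul_pos hk12 (pow_two_pos_of_ne_zero this)
          linarith
        · have : 0 < Kk r3 r4 * (x 2) ^ 2 := mul_pos hk34 (pow_two_pos_of_ne_zero hx2)
          linarith
      · have : 0 < Kk r4 r1 * (x 0) ^ 2 := mul_pos hk41 (pow_two_pos_of_ne_zero hx0)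
        linarith
  · have hval : L4 r1 r2 r3 r4 π 0 π = (r1 + r2) + (r2 + r3) + (r3 + r4) + (r4 + r1) := by
      rw [L4, ell_eq_of_cos h1.le h2.le (by simp), ell_eq_of_cos h2.le h3.le (by simp),
        ell_eq_of_cos h3.le h4.le (by simp), ell_eq_of_cos h4.le h1.le (by simp)]
    have hmax : ∀ q : ℝ × ℝ × ℝ,
        L4 r1 r2 r3 r4 q.1 q.2.1 q.2.2 ≤ L4 r1 r2 r3 r4 π 0 π := by
      intro q
      rw [hval, L4]
      have e1 := ell_le h1.le h2.le (q.2.1 - q.1)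
      have e2 := ell_le h2.le h3.le (q.2.2 - q.2.1)
      have e3 := ell_le h3.le h4.le (0 - q.2.2)
      have e4 := ell_le h4.le h1.le (q.1 - 0)
      linarith
    exact Filter.Eventually.of_forall hmax
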